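/- Let Q be a compact all-time controlled invariant set whose fiber map u ↦ Q(u) is continuous (upper and lower semicontinuous) in the Hausdorff metric on 𝒰_Q = 𝒰. Then for every ε > 0 there exists τ₀ ∈ ℤ_{>0} such that for all u ∈ 𝒰, the set Q^±(u, τ₀) := {x ∈ M : φ(t,x,u) ∈ Q for all −τ₀ < t < τ₀} is contained in the closed ε-neighborhood N_ε(Q(u)) of the fiber Q(u). -/

import Mathlib

/-- If the fiber map `u ↦ Q(u)` of a compact all-time controlled invariant set
`Q` is continuous in the Hausdorff metric, then for every `ε > 0` there is `τ₀ ≥ 1` such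
that for all `u`, the set `Q^±(u,τ₀) = {x : φ(t,x,u) ∈ Q for −τ₀ < t < τ₀}` is contained
in the closed `ε`-neighborhood of the fiber `Q(u)`. -/
theorem stmt_15 {M U : Type*} [MetricSpace M] [MetricSpace U] [CompactSpace U]
    (φ : ℤ → M → (ℤ → U) → M)
    (h0 : ∀ (x : M) (u : ℤ → U), φ 0 x u = x)
    (hcoc : ∀ (t s : ℤ) (x : M) (u : ℤ → U),
      φ (t + s) x u = φ s (φ t x u) (fun n : ℤ => u (n + t)))
    (hcont : ∀ t : ℤ, Continuous (fun p : M × (ℤ → U) => φ t p.1 p.2))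
    (Q : Set M) (hQ : IsCompact Q)
    (hQinv : ∀ x ∈ Q, ∃ u : ℤ → U, ∀ t : ℤ, φ t x u ∈ Q)
    (F : (ℤ → U) → TopologicalSpace.NonemptyCompacts M)
    (hF : ∀ u : ℤ → U, (F u : Set M) = {x : M | ∀ t : ℤ, φ t x u ∈ Q})
    (hFc : Continuous F) :
    ∀ ε > (0 : ℝ), ∃ τ₀ : ℕ, 0 < τ₀ ∧ ∀ u : ℤ → U,
      {x : M | ∀ t : ℤ, -(τ₀ : ℤ) < t → t < τ₀ → φ t x u ∈ Q} ⊆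
        Metric.cthickening ε {x : M | ∀ t : ℤ, φ t x u ∈ Q} := by
  intro ε hε
  by_contra hcon
  push_neg at hcon
  -- extract sequences
  have hsel : ∀ n : ℕ, ∃ u : ℤ → U, ∃ x : M,
      (∀ t : ℤ, -((n + 1 : ℕ) : ℤ) < t → t < ((n + 1 : ℕ) : ℤ) → φ t x u ∈ Q) ∧
      x ∉ Metric.cthickening ε {x : M | ∀ t : ℤ, φ t x u ∈ Q} := by
    intro n
    obtain ⟨u, hu⟩ := hcon (n + 1) (Nat.succ_pos n)
    obtain ⟨x, hx1, hx2⟩ := Set.not_subset.1 hu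
    exact ⟨u, x, hx1, hx2⟩
  choose u x hx1 hx2 using hsel
  -- x n ∈ Q
  have hxQ : ∀ n, x n ∈ Q := by
    intro n
    have := hx1 n 0 (by omega) (by omega)
    rwa [h0] at this
  -- ultrafilter limits
  set G : Ultrafilter ℕ := Ultrafilter.of Filter.atTop with hGdef
  have hG : (G : Filter ℕ) ≤ Filter.atTop := Ultrafilter.of_le _
  obtain ⟨x₀, hx₀Q, hx₀⟩ := hQ.ultrafilter_le_nhds' (G.map x)
    (Filter.mem_map.2 (Filter.univ_mem' hxQ))
  obtain ⟨u₀, -, hu₀⟩ := isCompact_univ.ultrafilter_le_nhds' (G.map u)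
    Filter.univ_mem
  have hx₀t : Filter.Tendsto x (G : Filter ℕ) (nhds x₀) := hx₀
  have hu₀t : Filter.Tendsto u (G : Filter ℕ) (nhds u₀) := hu₀
  -- the limit point belongs to the fiber F u₀
  have hmem : x₀ ∈ (F u₀ : Set M) := by
    rw [hF]
    intro t
    have htend : Filter.Tendsto (fun n => φ t (x n) (u n)) (G : Filter ℕ)
        (nhds (φ t x₀ u₀)) :=
      ((hcont t).continuousAt (x := (x₀, u₀))).tendsto.comp (hx₀t.prodMk_nhds hu₀t)
    have hev : ∀ᶠ n in (G : Filter ℕ), φ t (x n) (u n) ∈ Q := by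
      apply hG
      filter_upwards [Filter.eventually_ge_atTop t.natAbs] with n hn
      refine hx1 n t ?_ ?_
      · have : (t.natAbs : ℤ) < (n + 1 : ℕ) := by exact_mod_cast Nat.lt_succ_of_le hn
        omega
      · have : (t.natAbs : ℤ) < (n + 1 : ℕ) := by exact_mod_cast Nat.lt_succ_of_le hn
        omega
    exact hQ.isClosed.mem_of_tendsto htend hev
  have hzero : EMetric.infEdist x₀ (F u₀ : Set M) = 0 :=
    EMetric.infEdist_zero_of_mem hmem
  -- the contradiction via distances
  set εe : ENNReal := ENNReal.ofReal ε with hεe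
  have hεe0 : 0 < εe := by simpa [hεe] using hε
  have hgt : ∀ n, εe < EMetric.infEdist (x n) (F (u n) : Set M) := by
    intro n
    have := hx2 n
    rw [← hF (u n), Metric.mem_cthickening_iff] at this
    exact lt_of_not_ge this
  have hFt : Filter.Tendsto (fun n => F (u n)) (G : Filter ℕ) (nhds (F u₀)) :=
    (hFc.continuousAt).tendsto.comp hu₀t
  have h2 : 0 < εe / 2 := ENNReal.half_pos hεe0.ne'
  have hev1 : ∀ᶠ n in (G : Filter ℕ), edist (x n) x₀ < εe / 2 :=
    (EMetric.tendsto_nhds.1 hx₀t) _ h2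
  have hev2 : ∀ᶠ n in (G : Filter ℕ), edist (F (u n)) (F u₀) < εe / 2 :=
    (EMetric.tendsto_nhds.1 hFt) _ h2
  obtain ⟨n, hn1, hn2⟩ := (hev1.and hev2).exists
  have hle : EMetric.infEdist (x n) (F (u n) : Set M) ≤
      edist (x n) x₀ + edist (F (u n)) (F u₀) := by
    calc EMetric.infEdist (x n) (F (u n) : Set M)
        ≤ EMetric.infEdist (x n) (F u₀ : Set M) +
          EMetric.hausdorffEdist (F u₀ : Set M) (F (u n) : Set M) :=
          EMetric.infEdist_le_infEdist_add_hausdorffEdist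
      _ ≤ (EMetric.infEdist x₀ (F u₀ : Set M) + edist (x n) x₀) +
          EMetric.hausdorffEdist (F u₀ : Set M) (F (u n) : Set M) := by
          gcongr
          exact EMetric.infEdist_le_infEdist_add_edist
      _ = edist (x n) x₀ + edist (F (u n)) (F u₀) := by
          rw [hzero, zero_add]
          have : edist (F (u n)) (F u₀) =
              EMetric.hausdorffEdist (F (u n) : Set M) (F u₀ : Set M) := rfl
          rw [this]
          congr 1
          exact EMetric.hausdorffEdist_comm
  have : EMetric.infEdist (x n) (F (u n) : Set M) < εe := by
    calc EMetric.infEdist (x n) (F (u n) : Set M)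
        ≤ edist (x n) x₀ + edist (F (u n)) (F u₀) := hle
      _ < εe / 2 + εe / 2 := ENNReal.add_lt_add hn1 hn2
      _ = εe := ENNReal.add_halves _
  exact absurd this (not_lt.2 (hgt n).le)
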